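/- (Lemma 8, identity (5.11)) Let ρ₁ ∈ ℝ, ρ₂ = −(2/√5)ρ₁, ρ₃ = (2√3/√10)ρ₁, f = ρ₁e₁ + ρ₂e₂ + ρ₃e₃, and let P denote the orthogonal projection of ℝ⁴ onto the null space of L. If g ∈ ℝ⁴ is orthogonal to the null space of L and satisfies Lg = Ve₃ − P(Ve₃), then ⟨g, Vf⟩ = √6·ρ₁/(8B√5). -/

import Mathlib

open Finset

/-- The linearized collision operator of the one-dimensional Broadwell model with
collision frequency `B`, as a `4 × 4` matrix. -/
noncomputable def LBmat (B : ℝ) : Matrix (Fin 4) (Fin 4) ℝ :=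
  (-(B / 3)) • !![-2, Real.sqrt 2, Real.sqrt 2, -2;
                  Real.sqrt 2, -1, -1, Real.sqrt 2;
                  Real.sqrt 2, -1, -1, Real.sqrt 2;
                  -2, Real.sqrt 2, Real.sqrt 2, -2]

/-- `e₁ = (√2/2, 0, 0, −√2/2)`. -/
noncomputable def eB1 : EuclideanSpace ℝ (Fin 4) :=
  WithLp.toLp 2 ![Real.sqrt 2 / 2, 0, 0, -(Real.sqrt 2 / 2)]

/-- `e₂ = (1/√10, 2/√5, 0, 1/√10)`. -/
noncomputable def eB2 : EuclideanSpace ℝ (Fin 4) :=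
  WithLp.toLp 2 ![1 / Real.sqrt 10, 2 / Real.sqrt 5, 0, 1 / Real.sqrt 10]

/-- `e₃ = (1/√15, −1/√30, √5/√6, 1/√15)`. -/
noncomputable def eB3 : EuclideanSpace ℝ (Fin 4) :=
  WithLp.toLp 2 ![1 / Real.sqrt 15, -(1 / Real.sqrt 30), Real.sqrt 5 / Real.sqrt 6, 1 / Real.sqrt 15]

open scoped RealInnerProductSpace

/-- The Broadwell linearized collision operator as a linear map on `ℝ⁴` with the
Euclidean inner product. -/
noncomputable def LB (B : ℝ) : EuclideanSpace ℝ (Fin 4) →ₗ[ℝ] EuclideanSpace ℝ (Fin 4) :=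
  Matrix.toEuclideanLin (LBmat B)

/-- The diagonal velocity matrix `V = diag(1, 1/2, −1/2, −1)` applied to `f`. -/
noncomputable def VB (f : EuclideanSpace ℝ (Fin 4)) : EuclideanSpace ℝ (Fin 4) :=
  WithLp.toLp 2 ![f 0, f 1 / 2, -(f 2) / 2, -(f 3)]

noncomputable def vvB : EuclideanSpace ℝ (Fin 4) := WithLp.toLp 2 ![Real.sqrt 2, -1, -1, Real.sqrt 2]

lemma inner4 (x y : EuclideanSpace ℝ (Fin 4)) :
    ⟪x, y⟫ = x 0 * y 0 + x 1 * y 1 + x 2 * y 2 + x 3 * y 3 := by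
  simp [PiLp.inner_apply, Fin.sum_univ_four]; ring

lemma LB_eq (B : ℝ) (x : EuclideanSpace ℝ (Fin 4)) :
    LB B x = (B / 3 * ⟪vvB, x⟫) • vvB := by
  have h2 : Real.sqrt 2 * Real.sqrt 2 = 2 := Real.mul_self_sqrt (by norm_num)
  ext i
  have h : LB B x i = ∑ j, LBmat B i j * x j := by
    simp [LB, Matrix.toEuclideanLin_apply, Matrix.mulVec, dotProduct]
  rw [h]
  have hv : ((B / 3 * ⟪vvB, x⟫) • vvB) i = (B / 3 * ∑ j, vvB j * x j) * vvB i := by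
    simp [PiLp.inner_apply, RCLike.inner_apply]
    left; left; exact Finset.sum_congr rfl (fun j _ => mul_comm _ _)
  rw [hv]
  fin_cases i <;>
    simp [LBmat, vvB, Fin.sum_univ_four, Matrix.cons_val_zero, Matrix.cons_val_one] <;>
    (try ring) <;> linear_combination (-(B * x 3 + B * x 0) / 3) * h2

lemma mem_ker_LB {B : ℝ} (hB : 0 < B) {x : EuclideanSpace ℝ (Fin 4)} :
    x ∈ LinearMap.ker (LB B) ↔ ⟪vvB, x⟫ = 0 := by
  rw [LinearMap.mem_ker]
  constructor
  · intro h
    have h0 : LB B x 0 = 0 := by rw [h]; rfl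
    rw [LB_eq] at h0
    have : (B / 3 * ⟪vvB, x⟫) * Real.sqrt 2 = 0 := by
      simpa [vvB] using h0
    have hs : Real.sqrt 2 ≠ 0 := by positivity
    have := mul_eq_zero.mp this
    rcases this with h' | h'
    · rcases mul_eq_zero.mp h' with h'' | h''
      · exact absurd h'' (by positivity)
      · exact h''
    · exact absurd h' hs
  · intro h
    rw [LB_eq, h]
    simp

set_option maxHeartbeats 1000000 in
/-- Lemma 8, identity (5.11): with `ρ₂ = −(2/√5)ρ₁`, `ρ₃ = (2√3/√10)ρ₁`,
`f = ρ₁e₁ + ρ₂e₂ + ρ₃e₃` and `P` the orthogonal projection onto the null space of `L`,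
if `g ⟂ ker L` and `Lg = Ve₃ − P(Ve₃)`, then `⟨g, Vf⟩ = √6 ρ₁/(8B√5)`. -/
theorem broadwell_inner_Linv_Ve3 (B : ℝ) (hB : 0 < B) (ρ₁ ρ₂ ρ₃ : ℝ)
    (h2 : ρ₂ = -(2 / Real.sqrt 5) * ρ₁) (h3 : ρ₃ = 2 * Real.sqrt 3 / Real.sqrt 10 * ρ₁)
    (f : EuclideanSpace ℝ (Fin 4)) (hf : f = ρ₁ • eB1 + ρ₂ • eB2 + ρ₃ • eB3)
    (g : EuclideanSpace ℝ (Fin 4))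
    (hg₁ : ∀ h ∈ LinearMap.ker (LB B), ⟪g, h⟫ = 0)
    (hg₂ : LB B g = VB eB3 -
      (Submodule.orthogonalProjectionOnto (LinearMap.ker (LB B)) (VB eB3) : EuclideanSpace ℝ (Fin 4))) :
    ⟪g, VB f⟫ = Real.sqrt 6 * ρ₁ / (8 * B * Real.sqrt 5) := by
  have s2 : Real.sqrt 2 * Real.sqrt 2 = 2 := Real.mul_self_sqrt (by norm_num)
  have s3 : Real.sqrt 3 * Real.sqrt 3 = 3 := Real.mul_self_sqrt (by norm_num)
  have s5 : Real.sqrt 5 * Real.sqrt 5 = 5 := Real.mul_self_sqrt (by norm_num)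
  have p2 : (0:ℝ) < Real.sqrt 2 := Real.sqrt_pos.mpr (by norm_num)
  have p3 : (0:ℝ) < Real.sqrt 3 := Real.sqrt_pos.mpr (by norm_num)
  have p5 : (0:ℝ) < Real.sqrt 5 := Real.sqrt_pos.mpr (by norm_num)
  have qe : ∀ n : ℕ, ∀ a : ℝ, 0 ≤ a → Real.sqrt a ^ (2 * n) = a ^ n := by
    intro n a ha
    rw [pow_mul, Real.sq_sqrt ha]
  have qo : ∀ n : ℕ, ∀ a : ℝ, 0 ≤ a → Real.sqrt a ^ (2 * n + 1) = a ^ n * Real.sqrt a := by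
    intro n a ha
    rw [pow_succ, qe n a ha]
  have q26 : Real.sqrt 2 ^ 6 = (8:ℝ) := by
    have h := qe 3 2 (by norm_num)
    norm_num at h; linarith [h]
  have q28 : Real.sqrt 2 ^ 8 = (16:ℝ) := by
    have h := qe 4 2 (by norm_num)
    norm_num at h; linarith [h]
  have q210 : Real.sqrt 2 ^ 10 = (32:ℝ) := by
    have h := qe 5 2 (by norm_num)
    norm_num at h; linarith [h]
  have q59 : Real.sqrt 5 ^ 9 = 625 * Real.sqrt 5 := by
    have h := qo 4 5 (by norm_num)
    norm_num at h; linarith [h]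
  have q511 : Real.sqrt 5 ^ 11 = 3125 * Real.sqrt 5 := by
    have h := qo 5 5 (by norm_num)
    norm_num at h; linarith [h]
  have q36 : Real.sqrt 3 ^ 6 = (27:ℝ) := by
    have h := qe 3 3 (by norm_num)
    norm_num at h; linarith [h]
  have q38 : Real.sqrt 3 ^ 8 = (81:ℝ) := by
    have h := qe 4 3 (by norm_num)
    norm_num at h; linarith [h]
  have q39 : Real.sqrt 3 ^ 9 = 81 * Real.sqrt 3 := by
    have h := qo 4 3 (by norm_num)
    norm_num at h; linarith [h]
  have q57 : Real.sqrt 5 ^ 7 = 125 * Real.sqrt 5 := by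
    have h := qo 3 5 (by norm_num)
    norm_num at h; linarith [h]
  have q27 : Real.sqrt 2 ^ 7 = 8 * Real.sqrt 2 := by
    have h := qo 3 2 (by norm_num)
    norm_num at h; linarith [h]
  have q37 : Real.sqrt 3 ^ 7 = 27 * Real.sqrt 3 := by
    have h := qo 3 3 (by norm_num)
    norm_num at h; linarith [h]
  have q34 : Real.sqrt 3 ^ 4 = (9:ℝ) := by
    have h := qe 2 3 (by norm_num)
    norm_num at h; linarith [h]
  have q24 : Real.sqrt 2 ^ 4 = (4:ℝ) := by
    have h := qe 2 2 (by norm_num)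
    norm_num at h; linarith [h]
  have q54 : Real.sqrt 5 ^ 4 = (25:ℝ) := by
    have h := qe 2 5 (by norm_num)
    norm_num at h; linarith [h]
  have q23 : Real.sqrt 2 ^ 3 = 2 * Real.sqrt 2 := by
    have h := qo 1 2 (by norm_num)
    norm_num at h; linarith [h]
  have q33 : Real.sqrt 3 ^ 3 = 3 * Real.sqrt 3 := by
    have h := qo 1 3 (by norm_num)
    norm_num at h; linarith [h]
  have q53 : Real.sqrt 5 ^ 3 = 5 * Real.sqrt 5 := by
    have h := qo 1 5 (by norm_num)
    norm_num at h; linarith [h]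
  have q55 : Real.sqrt 5 ^ 5 = 25 * Real.sqrt 5 := by
    have h := qo 2 5 (by norm_num)
    norm_num at h; linarith [h]
  have q25 : Real.sqrt 2 ^ 5 = 4 * Real.sqrt 2 := by
    have h := qo 2 2 (by norm_num)
    norm_num at h; linarith [h]
  have q35 : Real.sqrt 3 ^ 5 = 9 * Real.sqrt 3 := by
    have h := qo 2 3 (by norm_num)
    norm_num at h; linarith [h]
  have q2 : Real.sqrt 2 ^ 2 = (2:ℝ) := Real.sq_sqrt (by norm_num)
  have q3 : Real.sqrt 3 ^ 2 = (3:ℝ) := Real.sq_sqrt (by norm_num)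
  have q5 : Real.sqrt 5 ^ 2 = (5:ℝ) := Real.sq_sqrt (by norm_num)
  have h6 : Real.sqrt 6 = Real.sqrt 2 * Real.sqrt 3 := by
    rw [show (6:ℝ) = 2 * 3 by norm_num, Real.sqrt_mul (by norm_num)]
  have h10 : Real.sqrt 10 = Real.sqrt 2 * Real.sqrt 5 := by
    rw [show (10:ℝ) = 2 * 5 by norm_num, Real.sqrt_mul (by norm_num)]
  have h15 : Real.sqrt 15 = Real.sqrt 3 * Real.sqrt 5 := by
    rw [show (15:ℝ) = 3 * 5 by norm_num, Real.sqrt_mul (by norm_num)]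
  have h30 : Real.sqrt 30 = Real.sqrt 2 * (Real.sqrt 3 * Real.sqrt 5) := by
    rw [show (30:ℝ) = 2 * 15 by norm_num, Real.sqrt_mul (by norm_num), h15]
  -- ⟪vvB, vvB⟫ = 6
  have hvv : ⟪vvB, vvB⟫ = 6 := by
    rw [inner4]; simp [vvB]; linarith [s2]
  -- ⟪vvB, VB eB3⟫ = 3 / √30
  have c3 : ⟪vvB, VB eB3⟫ = 3 / Real.sqrt 30 := by
    rw [inner4]
    simp only [VB, vvB, eB3, Matrix.cons_val_zero, Matrix.cons_val_one, Matrix.head_cons,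
      Matrix.cons_val_two, Matrix.cons_val_three, Matrix.tail_cons]
    rw [h30, h15, h6]
    field_simp
    ring_nf
    simp only [q2, q3, q5, q34, q24, q54, q23, q33, q53, q55, q25, q35, q26, q28, q210, q59, q511, q36, q38, q39, q57, q27, q37]
    ring
  -- ⟪g, vvB⟫ = 3 / (√30 * (2*B))
  have hgvv : ⟪g, vvB⟫ = 3 / Real.sqrt 30 / (2 * B) := by
    have hP : (Submodule.orthogonalProjectionOnto (LinearMap.ker (LB B)) (VB eB3) : EuclideanSpace ℝ (Fin 4))
        ∈ LinearMap.ker (LB B) := SetLike.coe_mem _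
    have hPv : ⟪vvB, (Submodule.orthogonalProjectionOnto (LinearMap.ker (LB B)) (VB eB3) :
        EuclideanSpace ℝ (Fin 4))⟫ = 0 := (mem_ker_LB hB).mp hP
    have key : ⟪vvB, LB B g⟫ = 3 / Real.sqrt 30 := by
      rw [hg₂, inner_sub_right, hPv, c3, sub_zero]
    rw [LB_eq, inner_smul_right, hvv] at key
    have hB' : (2 * B) ≠ 0 := by positivity
    have : (2 * B) * ⟪vvB, g⟫ = 3 / Real.sqrt 30 := by linarith [key]
    rw [real_inner_comm] at this
    field_simp at this ⊢
    linarith [this]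
  -- ⟪vvB, VB f⟫ = 3 ρ₁
  have cf : ⟪vvB, VB f⟫ = 3 * ρ₁ := by
    have hfi : ∀ i, f i = ρ₁ * eB1 i + ρ₂ * eB2 i + ρ₃ * eB3 i := by
      intro i; rw [hf]; rfl
    rw [inner4]
    simp only [VB, vvB, Matrix.cons_val_zero, Matrix.cons_val_one, Matrix.head_cons,
      Matrix.cons_val_two, Matrix.cons_val_three, Matrix.tail_cons]
    rw [hfi 0, hfi 1, hfi 2, hfi 3, h2, h3]
    simp only [eB1, eB2, eB3, Matrix.cons_val_zero, Matrix.cons_val_one, Matrix.head_cons,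
      Matrix.cons_val_two, Matrix.cons_val_three, Matrix.tail_cons]
    rw [h30, h15, h10, h6]
    field_simp
    ring_nf
    simp only [q2, q3, q5, q34, q24, q54, q23, q33, q53, q55, q25, q35, q26, q28, q210, q59, q511, q36, q38, q39, q57, q27, q37]
    ring
  -- decompose VB f
  have hw : (VB f - (ρ₁ / 2) • vvB) ∈ LinearMap.ker (LB B) := by
    rw [mem_ker_LB hB, inner_sub_right, inner_smul_right, cf, hvv]
    ring
  have hgw : ⟪g, VB f - (ρ₁ / 2) • vvB⟫ = 0 := hg₁ _ hw
  have main : ⟪g, VB f⟫ = (ρ₁ / 2) * (3 / Real.sqrt 30 / (2 * B)) := by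
    rw [inner_sub_right, inner_smul_right, hgvv] at hgw
    linarith [hgw]
  rw [main, h30, h6]
  have hB' : B ≠ 0 := ne_of_gt hB
  field_simp
  ring_nf
  simp only [q2, q3, q5, q34, q24, q54, q23, q33, q53, q55, q25, q35, q26, q28, q210, q59, q511, q36, q38, q39, q57, q27, q37]
  ring
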